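/- arXiv:2509.01378 — 2 statements merged into one kernel-verified Lean document; each statement's English description precedes it below -/
import Mathlib

section
/- For Q = [a,b,c] with real coefficients and z = x + iy ∈ ℍ with Q(z,1) ≠ 0, the Bruinier–Funke operator ξ_{2k+2} = 2iy^{2k+2} · conjugate(∂_{z̄}) applied to the function z ↦ Q_z/Q(z,1)^{k+1} yields −y^{2k}/Q(z̄,1)^k, where Q(z̄,1) = az̄² + bz̄ + c. -/
open Complex

/-- Wirtinger derivative with respect to `z̄`: `(1/2)(∂_x + i ∂_y)`. -/
noncomputable def dzbar (f : ℂ → ℂ) (z : ℂ) : ℂ :=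
  (1 / 2 : ℂ) * (deriv (fun x : ℝ => f ((x : ℂ) + z.im * Complex.I)) z.re
    + Complex.I * deriv (fun y : ℝ => f ((z.re : ℂ) + y * Complex.I)) z.im)

/-- Bruinier–Funke operator `ξ_κ f = 2 i y^κ conj(∂_{z̄} f)` (here `κ : ℤ`). -/
noncomputable def xiOp (κ : ℤ) (f : ℂ → ℂ) (z : ℂ) : ℂ :=
  2 * Complex.I * (z.im : ℂ) ^ κ * (starRingEnd ℂ) (dzbar f z)

/-- `Q(z,1) = a z² + b z + c`. -/
noncomputable def Qc (a b c : ℝ) (z : ℂ) : ℂ :=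
  (a : ℂ) * z ^ 2 + (b : ℂ) * z + (c : ℂ)

/-- `Q_z = (a|z|² + b Re z + c)/Im z`. -/
noncomputable def Qzq (a b c : ℝ) (z : ℂ) : ℝ :=
  (a * ‖z‖ ^ 2 + b * z.re + c) / z.im

lemma hQc (a b c : ℝ) (w : ℂ) : HasDerivAt (Qc a b c) (2 * a * w + b) w := by
  have h : HasDerivAt (fun u : ℂ => (a:ℂ) * u ^ 2 + ((b:ℂ) * id u + (c:ℂ)))
      ((a:ℂ) * (↑(2:ℕ) * w ^ (2-1)) + (b:ℂ) * 1) w :=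
    ((hasDerivAt_pow 2 w).const_mul (a:ℂ)).add
      (((hasDerivAt_id w).const_mul (b:ℂ)).add_const (c:ℂ))
  have h2 : HasDerivAt (Qc a b c) ((a:ℂ) * (↑(2:ℕ) * w ^ (2-1)) + (b:ℂ) * 1) w := by
    convert h using 2; simp [Qc]; ring
  convert h2 using 1; push_cast; ring

lemma hQcpow (a b c : ℝ) (k : ℕ) (w : ℂ) :
    HasDerivAt (fun u => Qc a b c u ^ (k+1)) (((k:ℂ)+1) * Qc a b c w ^ k * (2*a*w+b)) w := by
  have := (hQc a b c w).pow (k+1)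
  simp at this; exact this

theorem stmt11 (a b c : ℝ) (k : ℕ) (hk : 0 < k) (z : ℂ) (hz : 0 < z.im)
    (hQ : Qc a b c z ≠ 0) :
    xiOp (2 * k + 2) (fun w : ℂ => (Qzq a b c w : ℂ) / (Qc a b c w) ^ (k + 1)) z
      = -(z.im : ℂ) ^ (2 * k) / (Qc a b c (starRingEnd ℂ z)) ^ k := by
  set x := z.re with hx
  set y := z.im with hyy
  have hy : y ≠ 0 := ne_of_gt hz
  have hzxy : (x : ℂ) + (y:ℂ) * I = z := re_add_im z
  have hQpow : (Qc a b c z) ^ (k+1) ≠ 0 := pow_ne_zero _ hQ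
  set Q : ℂ := Qc a b c z with hQdef
  set D : ℂ := ((k:ℂ)+1) * Q ^ k * (2*a*z+b) with hD
  clear_value Q D
  -- x-partial of denominator
  have hdenx : HasDerivAt (fun x' : ℝ => Qc a b c ((x':ℂ) + (y:ℂ)*I) ^ (k+1)) D x := by
    have inner : HasDerivAt (fun w : ℂ => w + (y:ℂ)*I) 1 (x:ℂ) := by
      simpa using (hasDerivAt_id (x:ℂ)).add_const ((y:ℂ)*I)
    have h1 := hQcpow a b c k z
    rw [← hzxy] at h1
    have h2 := (h1.comp (x:ℂ) inner)
    rw [hzxy] at h2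
    have h3 : HasDerivAt (fun w : ℂ => Qc a b c (w + (y:ℂ)*I) ^ (k+1)) D (x:ℂ) := by
      rw [hD, hQdef, mul_one] at *; exact h2
    exact h3.comp_ofReal
  -- y-partial of denominator
  have hdeny : HasDerivAt (fun y' : ℝ => Qc a b c ((x:ℂ) + (y':ℂ)*I) ^ (k+1)) (D * I) y := by
    have inner : HasDerivAt (fun w : ℂ => (x:ℂ) + w * I) I (y:ℂ) := by
      simpa using ((hasDerivAt_id ((y:ℝ):ℂ)).mul_const I).const_add (x:ℂ)
    have h1 := hQcpow a b c k z
    rw [← hzxy] at h1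
    have h2 := (h1.comp ((y:ℝ):ℂ) inner)
    rw [hzxy] at h2
    have h3 : HasDerivAt (fun w : ℂ => Qc a b c ((x:ℂ) + w*I) ^ (k+1)) (D * I) (y:ℂ) := by
      rw [hD, hQdef]; exact h2
    exact h3.comp_ofReal
  -- numerator along x
  have hnumx : HasDerivAt (fun x' : ℝ => ((Qzq a b c ((x':ℂ) + (y:ℂ)*I)):ℂ))
      (((2*a*x+b)/y : ℝ) : ℂ) x := by
    have key : ∀ x' : ℝ, Qzq a b c ((x':ℂ) + (y:ℂ)*I) = (a*(x'^2+y^2)+b*x'+c)/y := by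
      intro x'
      simp [Qzq, Complex.sq_norm, Complex.normSq_apply]
      ring_nf
    have hr : HasDerivAt (fun x' : ℝ => (a*(x'^2+y^2)+b*x'+c)/y) ((2*a*x+b)/y) x := by
      have : HasDerivAt (fun x' : ℝ => a*(x'^2+y^2)+b*x'+c) (2*a*x+b) x := by
        have h : HasDerivAt (fun x' : ℝ => a*(x'^2+y^2)+(b*(id x')+c))
            (a*(↑(2:ℕ)*x^(2-1))+b*1) x :=
          (((hasDerivAt_pow 2 x).add_const (y^2)).const_mul a).add
            (((hasDerivAt_id x).const_mul b).add_const c)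
        have h2 : HasDerivAt (fun x' : ℝ => a*(x'^2+y^2)+b*x'+c)
            (a*(↑(2:ℕ)*x^(2-1))+b*1) x := by
          convert h using 2; simp only [id_eq]; ring
        convert h2 using 1; push_cast; ring
      exact this.div_const y
    have := hr.ofReal_comp
    simpa [key] using this
  -- numerator along y
  have hnumy : HasDerivAt (fun y' : ℝ => ((Qzq a b c ((x:ℂ) + (y':ℂ)*I)):ℂ))
      (((2*a*y*y - (a*(x^2+y^2)+b*x+c))/y^2 : ℝ) : ℂ) y := by
    have key : ∀ y' : ℝ, Qzq a b c ((x:ℂ) + (y':ℂ)*I) = (a*(x^2+y'^2)+b*x+c)/y' := by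
      intro y'
      simp [Qzq, Complex.sq_norm, Complex.normSq_apply]
      ring_nf
    have hnum : HasDerivAt (fun y' : ℝ => a*(x^2+y'^2)+b*x+c) (2*a*y) y := by
      have h : HasDerivAt (fun y' : ℝ => a*(x^2+y'^2)+(b*x+c))
          (a*(↑(2:ℕ)*y^(2-1))) y := by
        simpa using (((hasDerivAt_pow 2 y).const_add (x^2)).const_mul a).add_const (b*x+c)
      have h2 : HasDerivAt (fun y' : ℝ => a*(x^2+y'^2)+b*x+c)
          (a*(↑(2:ℕ)*y^(2-1))) y := by
        convert h using 2; ring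
      convert h2 using 1; push_cast; ring
    have hr : HasDerivAt (fun y' : ℝ => (a*(x^2+y'^2)+b*x+c)/y')
        ((2*a*y*y - (a*(x^2+y^2)+b*x+c))/y^2) y := by
      have := hnum.div (hasDerivAt_id y) hy
      simp only [Pi.div_def, id_eq, mul_one] at this; exact this
    have := hr.ofReal_comp
    simpa [key] using this
  -- full partials
  have hQpow' : Qc a b c ((x:ℂ) + (y:ℂ)*I) ^ (k+1) ≠ 0 := by rw [hzxy, ← hQdef]; exact hQpow
  have hfx := hnumx.div hdenx hQpow'
  have hfy := hnumy.div hdeny hQpow'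
  -- value of dzbar
  have hdz : dzbar (fun w : ℂ => (Qzq a b c w : ℂ) / (Qc a b c w) ^ (k + 1)) z
      = -I / (2 * (y:ℂ)^2 * Q^k) := by
    simp only [Pi.div_def] at hfx hfy
    rw [dzbar, ← hx, ← hyy, hfx.deriv, hfy.deriv, hzxy, ← hQdef]
    have hyC : (y:ℂ) ≠ 0 := Complex.ofReal_ne_zero.mpr hy
    have hQz : Q = (a:ℂ)*((x:ℂ)+(y:ℂ)*I)^2 + (b:ℂ)*((x:ℂ)+(y:ℂ)*I) + c := by
      rw [hQdef, ← hzxy]; rfl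
    have hQk : Q ^ k ≠ 0 := pow_ne_zero _ hQ
    have gen : ∀ (u u' v' P DD : ℂ), P ≠ 0 →
        (1/2 : ℂ) * ((u' * P - u * DD)/P^2 + I*((v'*P - u*(DD*I))/P^2))
          = ((1/2 : ℂ)*(u' + I*v')) / P := by
      intro u u' v' P DD hP
      have e : (u'*P - u*DD) + I*(v'*P - u*(DD*I)) = (u' + I*v')*P := by
        linear_combination (-(u*DD)) * Complex.I_sq
      calc (1/2:ℂ) * ((u'*P - u*DD)/P^2 + I*((v'*P - u*(DD*I))/P^2))
          = (1/2:ℂ) * (((u'*P - u*DD) + I*(v'*P - u*(DD*I)))/P^2) := by ring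
        _ = (1/2:ℂ) * (((u' + I*v')*P)/P^2) := by rw [e]
        _ = (1/2:ℂ)*(u'+I*v')/P := by rw [pow_two]; field_simp
    rw [gen _ _ _ _ _ hQpow]
    set A : ℂ := (1/2 : ℂ) * ((((2*a*x+b)/y : ℝ) : ℂ)
        + I * (((2*a*y*y - (a*(x^2+y^2)+b*x+c))/y^2 : ℝ) : ℂ)) with hA
    have key : A * (2*(y:ℂ)^2) = -I * Q := by
      rw [hA, hQz]
      push_cast
      field_simp
      linear_combination ((a:ℂ)*x*(y:ℂ)*2 + (a:ℂ)*(y:ℂ)^2*I + (b:ℂ)*(y:ℂ)) * Complex.I_sq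
    rw [pow_succ, div_eq_div_iff (by exact mul_ne_zero hQk hQ)
      (by exact mul_ne_zero (mul_ne_zero two_ne_zero (pow_ne_zero 2 hyC)) hQk)]
    calc A * (2*(y:ℂ)^2*Q^k) = (A * (2*(y:ℂ)^2))*Q^k := by ring
      _ = (-I*Q)*Q^k := by rw [key]
      _ = -I*(Q^k*Q) := by ring
  -- conclude
  have hconjQ : (starRingEnd ℂ) Q = Qc a b c (starRingEnd ℂ z) := by
    simp [hQdef, Qc, map_add, map_mul, map_pow, Complex.conj_ofReal]
  have hQbar : Qc a b c (starRingEnd ℂ z) ≠ 0 := by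
    rw [← hconjQ]; simpa using hQ
  have hyC : (y:ℂ) ≠ 0 := Complex.ofReal_ne_zero.mpr hy
  have hQbark : (Qc a b c (starRingEnd ℂ z)) ^ k ≠ 0 := pow_ne_zero _ hQbar
  have hconj2 : (starRingEnd ℂ) (-I / (2*(y:ℂ)^2*Q^k))
      = I / (2*(y:ℂ)^2*(Qc a b c (starRingEnd ℂ z))^k) := by
    rw [← hconjQ]
    simp [map_div₀, map_mul, map_pow, Complex.conj_ofReal, map_ofNat]
  rw [xiOp, hdz, ← hyy, hconj2]
  have hexp : ((y:ℂ)) ^ (2 * (k:ℤ) + 2) = (y:ℂ) ^ (2*k) * (y:ℂ)^2 := by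
    rw [show (2 * (k:ℤ) + 2) = ((2*k+2 : ℕ) : ℤ) by push_cast; ring, zpow_natCast, pow_add]
  rw [hexp]
  field_simp
  linear_combination Complex.I_sq
end

section
/- For Q = [a,b,c] with real coefficients, k > 0 integer, and z ∈ ℍ with Q(z,1) ≠ 0 and Q(z̄,1) ≠ 0, the function h(z) = Q_z/Q(z,1)^{k+1} satisfies Δ_{2k+2} h = 2k·h, where Δ_κ = −y²(∂²_x + ∂²_y) + iκy(∂_x + i∂_y) is the weight-κ hyperbolic Laplacian. -/
set_option maxHeartbeats 4000000

open Complex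

/-- Weight-`κ` hyperbolic Laplacian
`Δ_κ = -y²(∂²_x + ∂²_y) + iκy(∂_x + i∂_y)`, evaluated at `z`. -/
noncomputable def hypLaplacian (κ : ℝ) (f : ℂ → ℂ) (z : ℂ) : ℂ :=
  -(z.im : ℂ) ^ 2 *
      (iteratedDeriv 2 (fun x : ℝ => f ((x : ℂ) + z.im * Complex.I)) z.re
        + iteratedDeriv 2 (fun y : ℝ => f ((z.re : ℂ) + y * Complex.I)) z.im)
    + Complex.I * (κ : ℂ) * (z.im : ℂ) *
      (deriv (fun x : ℝ => f ((x : ℂ) + z.im * Complex.I)) z.re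
        + Complex.I * deriv (fun y : ℝ => f ((z.re : ℂ) + y * Complex.I)) z.im)

namespace S13
variable (a b c : ℝ) (k : ℕ)

noncomputable def Mnum (s t : ℂ) : ℂ := 2*(a:ℂ)*s*t + (b:ℂ)*(s+t) + 2*(c:ℂ)
noncomputable def M (s t : ℂ) : ℂ := Mnum a b c s t / (s - t)
noncomputable def Msn (s t : ℂ) : ℂ := (2*(a:ℂ)*t+(b:ℂ))*(s-t) - Mnum a b c s t
noncomputable def Mtn (s t : ℂ) : ℂ := (2*(a:ℂ)*s+(b:ℂ))*(s-t) + Mnum a b c s t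
noncomputable def Ms (s t : ℂ) : ℂ := Msn a b c s t / (s-t)^2
noncomputable def Mt (s t : ℂ) : ℂ := Mtn a b c s t / (s-t)^2
noncomputable def Qd (s : ℂ) : ℂ := 2*(a:ℂ)*s + (b:ℂ)
noncomputable def Mss (s t : ℂ) : ℂ := (-2)*Msn a b c s t/(s-t)^3
noncomputable def Mtt (s t : ℂ) : ℂ := 2*Mtn a b c s t/(s-t)^3
noncomputable def Mst (s t : ℂ) : ℂ :=
  ((2*(a:ℂ)*(s-t) - (2*(a:ℂ)*t+(b:ℂ)) - (2*(a:ℂ)*s+(b:ℂ)))*(s-t) + 2*Msn a b c s t)/(s-t)^3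
noncomputable def Mts (s t : ℂ) : ℂ :=
  ((2*(a:ℂ)*(s-t) + (2*(a:ℂ)*s+(b:ℂ)) + (2*(a:ℂ)*t+(b:ℂ)))*(s-t) - 2*Mtn a b c s t)/(s-t)^3

noncomputable def F (s t : ℂ) : ℂ := I * M a b c s t / (Qc a b c s)^(k+1)
noncomputable def G1 (s t : ℂ) : ℂ :=
  I * (Ms a b c s t * Qc a b c s - ((k:ℂ)+1) * M a b c s t * Qd a b s) / (Qc a b c s)^(k+2)
noncomputable def G2 (s t : ℂ) : ℂ := I * Mt a b c s t / (Qc a b c s)^(k+1)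
noncomputable def G11 (s t : ℂ) : ℂ :=
  I * (Mss a b c s t * (Qc a b c s)^2
    - 2*((k:ℂ)+1)*Ms a b c s t*Qd a b s*Qc a b c s
    - 2*(a:ℂ)*((k:ℂ)+1)*M a b c s t*Qc a b c s
    + ((k:ℂ)+1)*((k:ℂ)+2)*M a b c s t*(Qd a b s)^2) / (Qc a b c s)^(k+3)
noncomputable def G12 (s t : ℂ) : ℂ :=
  I * (Mst a b c s t * Qc a b c s - ((k:ℂ)+1)*Mt a b c s t*Qd a b s) / (Qc a b c s)^(k+2)
noncomputable def G21 (s t : ℂ) : ℂ :=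
  I * (Mts a b c s t * Qc a b c s - ((k:ℂ)+1)*Mt a b c s t*Qd a b s) / (Qc a b c s)^(k+2)
noncomputable def G22 (s t : ℂ) : ℂ := I * Mtt a b c s t / (Qc a b c s)^(k+1)

variable {a b c k}

theorem hasDerivAt_Qc {s : ℂ → ℂ} {s' w : ℂ} (hs : HasDerivAt s s' w) :
    HasDerivAt (fun w => Qc a b c (s w)) ((2*(a:ℂ)*(s w) + (b:ℂ)) * s') w := by
  unfold Qc
  have h := (((hs.pow 2).const_mul (a:ℂ)).add (hs.const_mul (b:ℂ))).add_const (c:ℂ)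
  refine h.congr_deriv (Eq.symm ?_)
  ring

theorem L_Qd {s : ℂ → ℂ} {s' w : ℂ} (hs : HasDerivAt s s' w) :
    HasDerivAt (fun w => Qd a b (s w)) (2*(a:ℂ)*s') w := by
  unfold Qd
  exact (hs.const_mul (2*(a:ℂ))).add_const (b:ℂ)

theorem L_Mnum {s t : ℂ → ℂ} {s' t' w : ℂ} (hs : HasDerivAt s s' w) (ht : HasDerivAt t t' w) :
    HasDerivAt (fun w => Mnum a b c (s w) (t w))
      (2*(a:ℂ)*(s'*t w + s w*t') + (b:ℂ)*(s'+t')) w := by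
  unfold Mnum
  have h := (((hs.const_mul (2*(a:ℂ))).mul ht).add ((hs.add ht).const_mul (b:ℂ))).add_const (2*(c:ℂ))
  refine h.congr_deriv (Eq.symm ?_)
  ring

theorem L_M {s t : ℂ → ℂ} {s' t' w : ℂ} (hs : HasDerivAt s s' w) (ht : HasDerivAt t t' w)
    (hst : s w - t w ≠ 0) :
    HasDerivAt (fun w => M a b c (s w) (t w))
      (Ms a b c (s w) (t w) * s' + Mt a b c (s w) (t w) * t') w := by
  unfold M
  have h := (L_Mnum (a:=a) (b:=b) (c:=c) hs ht).div (hs.sub ht) hst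
  refine h.congr_deriv (Eq.symm ?_)
  simp only [Pi.sub_apply, Pi.add_apply, Pi.mul_apply, Pi.pow_apply]
  unfold Ms Mt Msn Mtn Mnum
  rw [div_mul_eq_mul_div, div_mul_eq_mul_div,
    div_add_div _ _ (pow_ne_zero 2 hst) (pow_ne_zero 2 hst),
    div_eq_div_iff (mul_ne_zero (pow_ne_zero 2 hst) (pow_ne_zero 2 hst)) (pow_ne_zero 2 hst)]
  ring

theorem L_Ms {s t : ℂ → ℂ} {s' t' w : ℂ} (hs : HasDerivAt s s' w) (ht : HasDerivAt t t' w)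
    (hst : s w - t w ≠ 0) :
    HasDerivAt (fun w => Ms a b c (s w) (t w))
      (Mss a b c (s w) (t w) * s' + Mst a b c (s w) (t w) * t') w := by
  unfold Ms Msn
  have hnum := (((ht.const_mul (2*(a:ℂ))).add_const (b:ℂ)).mul (hs.sub ht)).sub
    (L_Mnum (a:=a) (b:=b) (c:=c) hs ht)
  have h := hnum.div ((hs.sub ht).pow 2) (pow_ne_zero 2 hst)
  refine h.congr_deriv (Eq.symm ?_)
  simp only [Pi.sub_apply, Pi.add_apply, Pi.mul_apply, Pi.pow_apply]
  unfold Mss Mst Msn Mnum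
  rw [div_mul_eq_mul_div, div_mul_eq_mul_div,
    div_add_div _ _ (pow_ne_zero 3 hst) (pow_ne_zero 3 hst),
    div_eq_div_iff (mul_ne_zero (pow_ne_zero 3 hst) (pow_ne_zero 3 hst))
      (pow_ne_zero 2 (pow_ne_zero 2 hst))]
  ring

theorem L_Mt {s t : ℂ → ℂ} {s' t' w : ℂ} (hs : HasDerivAt s s' w) (ht : HasDerivAt t t' w)
    (hst : s w - t w ≠ 0) :
    HasDerivAt (fun w => Mt a b c (s w) (t w))
      (Mts a b c (s w) (t w) * s' + Mtt a b c (s w) (t w) * t') w := by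
  unfold Mt Mtn
  have hnum := (((hs.const_mul (2*(a:ℂ))).add_const (b:ℂ)).mul (hs.sub ht)).add
    (L_Mnum (a:=a) (b:=b) (c:=c) hs ht)
  have h := hnum.div ((hs.sub ht).pow 2) (pow_ne_zero 2 hst)
  refine h.congr_deriv (Eq.symm ?_)
  simp only [Pi.sub_apply, Pi.add_apply, Pi.mul_apply, Pi.pow_apply]
  unfold Mts Mtt Mtn Mnum
  rw [div_mul_eq_mul_div, div_mul_eq_mul_div,
    div_add_div _ _ (pow_ne_zero 3 hst) (pow_ne_zero 3 hst),
    div_eq_div_iff (mul_ne_zero (pow_ne_zero 3 hst) (pow_ne_zero 3 hst))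
      (pow_ne_zero 2 (pow_ne_zero 2 hst))]
  ring

theorem L_F {s t : ℂ → ℂ} {s' t' w : ℂ} (hs : HasDerivAt s s' w) (ht : HasDerivAt t t' w)
    (hst : s w - t w ≠ 0) (hQ : Qc a b c (s w) ≠ 0) :
    HasDerivAt (fun w => F a b c k (s w) (t w))
      (G1 a b c k (s w) (t w) * s' + G2 a b c k (s w) (t w) * t') w := by
  unfold F
  have h := ((L_M (a:=a) (b:=b) (c:=c) hs ht hst).const_mul I).div
    ((hasDerivAt_Qc (a:=a) (b:=b) (c:=c) hs).pow (k+1)) (pow_ne_zero _ hQ)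
  refine h.congr_deriv (Eq.symm ?_)
  simp only [Pi.sub_apply, Pi.add_apply, Pi.mul_apply, Pi.pow_apply]
  unfold G1 G2 Qd
  simp only [show k+1-1 = k from rfl]
  push_cast
  rw [div_mul_eq_mul_div, div_mul_eq_mul_div,
    div_add_div _ _ (pow_ne_zero (k+2) hQ) (pow_ne_zero (k+1) hQ),
    div_eq_div_iff (mul_ne_zero (pow_ne_zero (k+2) hQ) (pow_ne_zero (k+1) hQ))
      (pow_ne_zero 2 (pow_ne_zero (k+1) hQ))]
  ring

theorem L_G1 {s t : ℂ → ℂ} {s' t' w : ℂ} (hs : HasDerivAt s s' w) (ht : HasDerivAt t t' w)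
    (hst : s w - t w ≠ 0) (hQ : Qc a b c (s w) ≠ 0) :
    HasDerivAt (fun w => G1 a b c k (s w) (t w))
      (G11 a b c k (s w) (t w) * s' + G12 a b c k (s w) (t w) * t') w := by
  unfold G1
  have hN := ((L_Ms (a:=a) (b:=b) (c:=c) hs ht hst).mul (hasDerivAt_Qc (a:=a) (b:=b) (c:=c) hs)).sub
    (((L_M (a:=a) (b:=b) (c:=c) hs ht hst).const_mul ((k:ℂ)+1)).mul (L_Qd (a:=a) (b:=b) hs))
  have h := (hN.const_mul I).div ((hasDerivAt_Qc (a:=a) (b:=b) (c:=c) hs).pow (k+2)) (pow_ne_zero _ hQ)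
  refine h.congr_deriv (Eq.symm ?_)
  simp only [Pi.sub_apply, Pi.add_apply, Pi.mul_apply, Pi.pow_apply]
  unfold G11 G12 Qd
  simp only [show k+2-1 = k+1 from rfl]
  push_cast
  rw [div_mul_eq_mul_div, div_mul_eq_mul_div,
    div_add_div _ _ (pow_ne_zero (k+3) hQ) (pow_ne_zero (k+2) hQ),
    div_eq_div_iff (mul_ne_zero (pow_ne_zero (k+3) hQ) (pow_ne_zero (k+2) hQ))
      (pow_ne_zero 2 (pow_ne_zero (k+2) hQ))]
  ring

theorem L_G2 {s t : ℂ → ℂ} {s' t' w : ℂ} (hs : HasDerivAt s s' w) (ht : HasDerivAt t t' w)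
    (hst : s w - t w ≠ 0) (hQ : Qc a b c (s w) ≠ 0) :
    HasDerivAt (fun w => G2 a b c k (s w) (t w))
      (G21 a b c k (s w) (t w) * s' + G22 a b c k (s w) (t w) * t') w := by
  unfold G2
  have h := ((L_Mt (a:=a) (b:=b) (c:=c) hs ht hst).const_mul I).div
    ((hasDerivAt_Qc (a:=a) (b:=b) (c:=c) hs).pow (k+1)) (pow_ne_zero _ hQ)
  refine h.congr_deriv (Eq.symm ?_)
  simp only [Pi.sub_apply, Pi.add_apply, Pi.mul_apply, Pi.pow_apply]
  unfold G21 G22 Qd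
  simp only [show k+1-1 = k from rfl]
  push_cast
  rw [div_mul_eq_mul_div, div_mul_eq_mul_div,
    div_add_div _ _ (pow_ne_zero (k+2) hQ) (pow_ne_zero (k+1) hQ),
    div_eq_div_iff (mul_ne_zero (pow_ne_zero (k+2) hQ) (pow_ne_zero (k+1) hQ))
      (pow_ne_zero 2 (pow_ne_zero (k+1) hQ))]
  ring

theorem Gsym {s t : ℂ} (hst : s - t ≠ 0) : G12 a b c k s t = G21 a b c k s t := by
  have h : Mst a b c s t = Mts a b c s t := by
    unfold Mst Mts Msn Mtn Mnum
    rw [div_eq_div_iff (pow_ne_zero 3 hst) (pow_ne_zero 3 hst)]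
    ring
  unfold G12 G21
  rw [h]

theorem key {s t : ℂ} (hst : s - t ≠ 0) (hQ : Qc a b c s ≠ 0) :
    (s-t)^2 * G12 a b c k s t + (2*(k:ℂ)+2)*(s-t)*G2 a b c k s t
      = 2*(k:ℂ)*F a b c k s t := by
  have hMt : Mt a b c s t * (s-t)^2 = Mtn a b c s t := div_mul_cancel₀ _ (pow_ne_zero 2 hst)
  have hM : M a b c s t * (s-t) = Mnum a b c s t := div_mul_cancel₀ _ hst
  have hMst : Mst a b c s t * (s-t)^3
      = (2*(a:ℂ)*(s-t) - (2*(a:ℂ)*t+(b:ℂ)) - (2*(a:ℂ)*s+(b:ℂ)))*(s-t) + 2*Msn a b c s t :=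
    div_mul_cancel₀ _ (pow_ne_zero 3 hst)
  have hmain : (((2*(a:ℂ)*(s-t) - (2*(a:ℂ)*t+(b:ℂ)) - (2*(a:ℂ)*s+(b:ℂ)))*(s-t) + 2*Msn a b c s t))
        * Qc a b c s
      - ((k:ℂ)+1)*(Mtn a b c s t)*Qd a b s*(s-t)
      + (2*(k:ℂ)+2)*(Mtn a b c s t * Qc a b c s)
      = 2*(k:ℂ)*(Mnum a b c s t * Qc a b c s) := by
    unfold Msn Mtn Mnum Qd Qc
    ring
  unfold G12 G2 F
  rw [← mul_div_assoc, ← mul_div_assoc, ← mul_div_assoc,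
    div_add_div _ _ (pow_ne_zero (k+2) hQ) (pow_ne_zero (k+1) hQ),
    div_eq_div_iff (mul_ne_zero (pow_ne_zero (k+2) hQ) (pow_ne_zero (k+1) hQ))
      (pow_ne_zero (k+1) hQ)]
  apply mul_left_cancel₀ hst
  linear_combination (I*(Qc a b c s^(k+1)*Qc a b c s^(k+1))*Qc a b c s) * hMst
    + (I*(Qc a b c s^(k+1)*Qc a b c s^(k+1))*(-(((k:ℂ)+1)*Qd a b s*(s-t)) + (2*(k:ℂ)+2)*Qc a b c s)) * hMt
    + (-(I*(Qc a b c s^(k+1)*Qc a b c s^(k+1))*2*(k:ℂ)*Qc a b c s)) * hM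
    + (I*(Qc a b c s^(k+1)*Qc a b c s^(k+1))) * hmain

theorem coe_line (τ y : ℝ) (hy : y ≠ 0) :
    (↑(Qzq a b c ((τ:ℂ)+(y:ℂ)*I)) : ℂ) / (Qc a b c ((τ:ℂ)+(y:ℂ)*I))^(k+1)
      = F a b c k ((τ:ℂ)+(y:ℂ)*I) ((τ:ℂ)-(y:ℂ)*I) := by
  have hst : ((τ:ℂ)+(y:ℂ)*I) - ((τ:ℂ)-(y:ℂ)*I) ≠ 0 := by
    have h2 : ((τ:ℂ)+(y:ℂ)*I) - ((τ:ℂ)-(y:ℂ)*I) = 2*(y:ℂ)*I := by ring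
    rw [h2]
    simp [hy, Complex.I_ne_zero]
  have hnum : (↑(Qzq a b c ((τ:ℂ)+(y:ℂ)*I)) : ℂ) = I * M a b c ((τ:ℂ)+(y:ℂ)*I) ((τ:ℂ)-(y:ℂ)*I) := by
    have hre : ((τ:ℂ)+(y:ℂ)*I).re = τ := by simp
    have him : ((τ:ℂ)+(y:ℂ)*I).im = y := by simp
    have habs : ‖((τ:ℂ)+(y:ℂ)*I)‖^2 = τ^2+y^2 := by
      rw [Complex.sq_norm, Complex.normSq_add_mul_I]
    unfold Qzq M Mnum
    rw [hre, him, habs]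
    push_cast
    rw [← mul_div_assoc,
      div_eq_div_iff (Complex.ofReal_ne_zero.mpr hy) hst]
    linear_combination (2*(a:ℂ)*(y:ℂ)^3*I) * Complex.I_sq
  rw [hnum]
  unfold F
  rfl

end S13

open S13 in
theorem stmt13 (a b c : ℝ) (k : ℕ) (hk : 0 < k) (z : ℂ) (hz : 0 < z.im)
    (hQ : Qc a b c z ≠ 0) (hQbar : Qc a b c (starRingEnd ℂ z) ≠ 0) :
    hypLaplacian (2 * k + 2)
        (fun w : ℂ => (Qzq a b c w : ℂ) / (Qc a b c w) ^ (k + 1)) z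
      = 2 * (k : ℂ) * ((Qzq a b c z : ℂ) / (Qc a b c z) ^ (k + 1)) := by
  have hy : z.im ≠ 0 := ne_of_gt hz
  have hQS : Qc a b c ((z.re:ℂ) + (z.im:ℂ)*I) ≠ 0 := by rwa [Complex.re_add_im]
  have hstS : ((z.re:ℂ)+(z.im:ℂ)*I) - ((z.re:ℂ)-(z.im:ℂ)*I) ≠ 0 := by
    have h2 : ((z.re:ℂ)+(z.im:ℂ)*I) - ((z.re:ℂ)-(z.im:ℂ)*I) = 2*(z.im:ℂ)*I := by ring
    rw [h2]; simp [hy, Complex.I_ne_zero]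
  have hcontX : Continuous fun τ : ℝ => Qc a b c ((τ:ℂ)+(z.im:ℂ)*I) := by
    unfold Qc; continuity
  have hcontY : Continuous fun τ : ℝ => Qc a b c ((z.re:ℂ)+(τ:ℂ)*I) := by
    unfold Qc; continuity
  have evX : ∀ᶠ (τ : ℝ) in nhds z.re, Qc a b c ((τ:ℂ)+(z.im:ℂ)*I) ≠ 0 :=
    hcontX.continuousAt.eventually_ne hQS
  have evY : ∀ᶠ (τ : ℝ) in nhds z.im, (τ ≠ 0 ∧ Qc a b c ((z.re:ℂ)+(τ:ℂ)*I) ≠ 0) :=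
    (continuous_id.continuousAt.eventually_ne hy).and (hcontY.continuousAt.eventually_ne hQS)
  -- X-line derivative facts
  have hDX : ∀ τ : ℝ, Qc a b c ((τ:ℂ)+(z.im:ℂ)*I) ≠ 0 →
      HasDerivAt (fun τ' : ℝ => F a b c k ((τ':ℂ)+(z.im:ℂ)*I) ((τ':ℂ)-(z.im:ℂ)*I))
        (G1 a b c k ((τ:ℂ)+(z.im:ℂ)*I) ((τ:ℂ)-(z.im:ℂ)*I)
          + G2 a b c k ((τ:ℂ)+(z.im:ℂ)*I) ((τ:ℂ)-(z.im:ℂ)*I)) τ := by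
    intro τ hq
    have hst' : ((τ:ℂ)+(z.im:ℂ)*I) - ((τ:ℂ)-(z.im:ℂ)*I) ≠ 0 := by
      have h2 : ((τ:ℂ)+(z.im:ℂ)*I) - ((τ:ℂ)-(z.im:ℂ)*I) = 2*(z.im:ℂ)*I := by ring
      rw [h2]; simp [hy, Complex.I_ne_zero]
    have h := (L_F (a:=a) (b:=b) (c:=c) (k:=k) (s := fun w : ℂ => w + (z.im:ℂ)*I) (t := fun w : ℂ => w - (z.im:ℂ)*I)
      ((hasDerivAt_id ((τ:ℂ))).add_const _) ((hasDerivAt_id ((τ:ℂ))).sub_const _) hst' hq).comp_ofReal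
    simpa using h
  have hDX2 : ∀ τ : ℝ, Qc a b c ((τ:ℂ)+(z.im:ℂ)*I) ≠ 0 →
      HasDerivAt (fun τ' : ℝ => G1 a b c k ((τ':ℂ)+(z.im:ℂ)*I) ((τ':ℂ)-(z.im:ℂ)*I)
          + G2 a b c k ((τ':ℂ)+(z.im:ℂ)*I) ((τ':ℂ)-(z.im:ℂ)*I))
        (G11 a b c k ((τ:ℂ)+(z.im:ℂ)*I) ((τ:ℂ)-(z.im:ℂ)*I)
          + G12 a b c k ((τ:ℂ)+(z.im:ℂ)*I) ((τ:ℂ)-(z.im:ℂ)*I)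
          + G21 a b c k ((τ:ℂ)+(z.im:ℂ)*I) ((τ:ℂ)-(z.im:ℂ)*I)
          + G22 a b c k ((τ:ℂ)+(z.im:ℂ)*I) ((τ:ℂ)-(z.im:ℂ)*I)) τ := by
    intro τ hq
    have hst' : ((τ:ℂ)+(z.im:ℂ)*I) - ((τ:ℂ)-(z.im:ℂ)*I) ≠ 0 := by
      have h2 : ((τ:ℂ)+(z.im:ℂ)*I) - ((τ:ℂ)-(z.im:ℂ)*I) = 2*(z.im:ℂ)*I := by ring
      rw [h2]; simp [hy, Complex.I_ne_zero]
    have h := (((L_G1 (a:=a) (b:=b) (c:=c) (k:=k) (s := fun w : ℂ => w + (z.im:ℂ)*I) (t := fun w : ℂ => w - (z.im:ℂ)*I)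
        ((hasDerivAt_id ((τ:ℂ))).add_const _) ((hasDerivAt_id ((τ:ℂ))).sub_const _) hst' hq).add
      (L_G2 (a:=a) (b:=b) (c:=c) (k:=k) (s := fun w : ℂ => w + (z.im:ℂ)*I) (t := fun w : ℂ => w - (z.im:ℂ)*I)
        ((hasDerivAt_id ((τ:ℂ))).add_const _) ((hasDerivAt_id ((τ:ℂ))).sub_const _) hst' hq))).comp_ofReal
    have h2 : HasDerivAt (fun τ' : ℝ => G1 a b c k ((τ':ℂ)+(z.im:ℂ)*I) ((τ':ℂ)-(z.im:ℂ)*I)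
          + G2 a b c k ((τ':ℂ)+(z.im:ℂ)*I) ((τ':ℂ)-(z.im:ℂ)*I)) _ τ := h
    convert h2 using 1
    ring
  -- Y-line derivative facts
  have hDY : ∀ τ : ℝ, τ ≠ 0 → Qc a b c ((z.re:ℂ)+(τ:ℂ)*I) ≠ 0 →
      HasDerivAt (fun τ' : ℝ => F a b c k ((z.re:ℂ)+(τ':ℂ)*I) ((z.re:ℂ)-(τ':ℂ)*I))
        ((G1 a b c k ((z.re:ℂ)+(τ:ℂ)*I) ((z.re:ℂ)-(τ:ℂ)*I)
          - G2 a b c k ((z.re:ℂ)+(τ:ℂ)*I) ((z.re:ℂ)-(τ:ℂ)*I))*I) τ := by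
    intro τ h0 hq
    have hst' : ((z.re:ℂ)+(τ:ℂ)*I) - ((z.re:ℂ)-(τ:ℂ)*I) ≠ 0 := by
      have h2 : ((z.re:ℂ)+(τ:ℂ)*I) - ((z.re:ℂ)-(τ:ℂ)*I) = 2*(τ:ℂ)*I := by ring
      rw [h2]; simp [h0, Complex.I_ne_zero]
    have h := (L_F (a:=a) (b:=b) (c:=c) (k:=k) (s := fun w : ℂ => (z.re:ℂ) + w*I) (t := fun w : ℂ => (z.re:ℂ) - w*I)
      (((hasDerivAt_id ((τ:ℂ))).mul_const I).const_add _)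
      (((hasDerivAt_id ((τ:ℂ))).mul_const I).const_sub _) hst' hq).comp_ofReal
    have h2 : HasDerivAt (fun τ' : ℝ => F a b c k ((z.re:ℂ)+(τ':ℂ)*I) ((z.re:ℂ)-(τ':ℂ)*I)) _ τ := h
    convert h2 using 1
    ring
  have hDY2 : ∀ τ : ℝ, τ ≠ 0 → Qc a b c ((z.re:ℂ)+(τ:ℂ)*I) ≠ 0 →
      HasDerivAt (fun τ' : ℝ => (G1 a b c k ((z.re:ℂ)+(τ':ℂ)*I) ((z.re:ℂ)-(τ':ℂ)*I)
          - G2 a b c k ((z.re:ℂ)+(τ':ℂ)*I) ((z.re:ℂ)-(τ':ℂ)*I))*I)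
        (((G11 a b c k ((z.re:ℂ)+(τ:ℂ)*I) ((z.re:ℂ)-(τ:ℂ)*I)
          - G12 a b c k ((z.re:ℂ)+(τ:ℂ)*I) ((z.re:ℂ)-(τ:ℂ)*I)
          - G21 a b c k ((z.re:ℂ)+(τ:ℂ)*I) ((z.re:ℂ)-(τ:ℂ)*I)
          + G22 a b c k ((z.re:ℂ)+(τ:ℂ)*I) ((z.re:ℂ)-(τ:ℂ)*I))*I)*I) τ := by
    intro τ h0 hq
    have hst' : ((z.re:ℂ)+(τ:ℂ)*I) - ((z.re:ℂ)-(τ:ℂ)*I) ≠ 0 := by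
      have h2 : ((z.re:ℂ)+(τ:ℂ)*I) - ((z.re:ℂ)-(τ:ℂ)*I) = 2*(τ:ℂ)*I := by ring
      rw [h2]; simp [h0, Complex.I_ne_zero]
    have h := (((L_G1 (a:=a) (b:=b) (c:=c) (k:=k) (s := fun w : ℂ => (z.re:ℂ) + w*I) (t := fun w : ℂ => (z.re:ℂ) - w*I)
        (((hasDerivAt_id ((τ:ℂ))).mul_const I).const_add _)
        (((hasDerivAt_id ((τ:ℂ))).mul_const I).const_sub _) hst' hq).sub
      (L_G2 (a:=a) (b:=b) (c:=c) (k:=k) (s := fun w : ℂ => (z.re:ℂ) + w*I) (t := fun w : ℂ => (z.re:ℂ) - w*I)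
        (((hasDerivAt_id ((τ:ℂ))).mul_const I).const_add _)
        (((hasDerivAt_id ((τ:ℂ))).mul_const I).const_sub _) hst' hq)).mul_const I).comp_ofReal
    have h2 : HasDerivAt (fun τ' : ℝ => (G1 a b c k ((z.re:ℂ)+(τ':ℂ)*I) ((z.re:ℂ)-(τ':ℂ)*I)
        - G2 a b c k ((z.re:ℂ)+(τ':ℂ)*I) ((z.re:ℂ)-(τ':ℂ)*I))*I) _ τ := h
    convert h2 using 1
    ring
  -- assemble
  have hfX : (fun x : ℝ => (↑(Qzq a b c ((x:ℂ) + (z.im:ℂ)*I)) : ℂ)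
        / (Qc a b c ((x:ℂ)+(z.im:ℂ)*I))^(k+1))
      = fun τ : ℝ => F a b c k ((τ:ℂ)+(z.im:ℂ)*I) ((τ:ℂ)-(z.im:ℂ)*I) :=
    funext fun τ => coe_line τ z.im hy
  have d1X : deriv (fun τ' : ℝ => F a b c k ((τ':ℂ)+(z.im:ℂ)*I) ((τ':ℂ)-(z.im:ℂ)*I)) z.re
      = G1 a b c k ((z.re:ℂ)+(z.im:ℂ)*I) ((z.re:ℂ)-(z.im:ℂ)*I)
        + G2 a b c k ((z.re:ℂ)+(z.im:ℂ)*I) ((z.re:ℂ)-(z.im:ℂ)*I) := (hDX z.re hQS).deriv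
  have d2X : iteratedDeriv 2 (fun τ' : ℝ => F a b c k ((τ':ℂ)+(z.im:ℂ)*I) ((τ':ℂ)-(z.im:ℂ)*I)) z.re
      = G11 a b c k ((z.re:ℂ)+(z.im:ℂ)*I) ((z.re:ℂ)-(z.im:ℂ)*I)
        + G12 a b c k ((z.re:ℂ)+(z.im:ℂ)*I) ((z.re:ℂ)-(z.im:ℂ)*I)
        + G21 a b c k ((z.re:ℂ)+(z.im:ℂ)*I) ((z.re:ℂ)-(z.im:ℂ)*I)
        + G22 a b c k ((z.re:ℂ)+(z.im:ℂ)*I) ((z.re:ℂ)-(z.im:ℂ)*I) := by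
    rw [iteratedDeriv_succ, iteratedDeriv_one]
    have hEv : deriv (fun τ' : ℝ => F a b c k ((τ':ℂ)+(z.im:ℂ)*I) ((τ':ℂ)-(z.im:ℂ)*I))
        =ᶠ[nhds z.re] (fun τ : ℝ => G1 a b c k ((τ:ℂ)+(z.im:ℂ)*I) ((τ:ℂ)-(z.im:ℂ)*I)
          + G2 a b c k ((τ:ℂ)+(z.im:ℂ)*I) ((τ:ℂ)-(z.im:ℂ)*I)) :=
      evX.mono fun τ hτ => (hDX τ hτ).deriv
    rw [Filter.EventuallyEq.deriv_eq hEv]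
    exact (hDX2 z.re hQS).deriv
  have hEqY : (fun τ : ℝ => (↑(Qzq a b c ((z.re:ℂ)+(τ:ℂ)*I)) : ℂ)
        / (Qc a b c ((z.re:ℂ)+(τ:ℂ)*I))^(k+1))
      =ᶠ[nhds z.im] (fun τ : ℝ => F a b c k ((z.re:ℂ)+(τ:ℂ)*I) ((z.re:ℂ)-(τ:ℂ)*I)) :=
    evY.mono fun τ hτ => coe_line z.re τ hτ.1
  have d1Y : deriv (fun τ : ℝ => (↑(Qzq a b c ((z.re:ℂ)+(τ:ℂ)*I)) : ℂ)
        / (Qc a b c ((z.re:ℂ)+(τ:ℂ)*I))^(k+1)) z.im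
      = (G1 a b c k ((z.re:ℂ)+(z.im:ℂ)*I) ((z.re:ℂ)-(z.im:ℂ)*I)
        - G2 a b c k ((z.re:ℂ)+(z.im:ℂ)*I) ((z.re:ℂ)-(z.im:ℂ)*I))*I := by
    rw [hEqY.deriv_eq]
    exact (hDY z.im hy hQS).deriv
  have d2Y : iteratedDeriv 2 (fun τ : ℝ => (↑(Qzq a b c ((z.re:ℂ)+(τ:ℂ)*I)) : ℂ)
        / (Qc a b c ((z.re:ℂ)+(τ:ℂ)*I))^(k+1)) z.im
      = ((G11 a b c k ((z.re:ℂ)+(z.im:ℂ)*I) ((z.re:ℂ)-(z.im:ℂ)*I)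
        - G12 a b c k ((z.re:ℂ)+(z.im:ℂ)*I) ((z.re:ℂ)-(z.im:ℂ)*I)
        - G21 a b c k ((z.re:ℂ)+(z.im:ℂ)*I) ((z.re:ℂ)-(z.im:ℂ)*I)
        + G22 a b c k ((z.re:ℂ)+(z.im:ℂ)*I) ((z.re:ℂ)-(z.im:ℂ)*I))*I)*I := by
    rw [iteratedDeriv_succ, iteratedDeriv_one]
    have hEv : deriv (fun τ : ℝ => (↑(Qzq a b c ((z.re:ℂ)+(τ:ℂ)*I)) : ℂ)
          / (Qc a b c ((z.re:ℂ)+(τ:ℂ)*I))^(k+1))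
        =ᶠ[nhds z.im] (fun τ : ℝ => (G1 a b c k ((z.re:ℂ)+(τ:ℂ)*I) ((z.re:ℂ)-(τ:ℂ)*I)
          - G2 a b c k ((z.re:ℂ)+(τ:ℂ)*I) ((z.re:ℂ)-(τ:ℂ)*I))*I) := by
      refine hEqY.deriv.trans ?_
      exact evY.mono fun τ hτ => (hDY τ hτ.1 hτ.2).deriv
    rw [Filter.EventuallyEq.deriv_eq hEv]
    exact (hDY2 z.im hy hQS).deriv
  have hcore := key (a:=a) (b:=b) (c:=c) (k:=k)
    (s := (z.re:ℂ)+(z.im:ℂ)*I) (t := (z.re:ℂ)-(z.im:ℂ)*I) hstS hQS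
  have hsym := Gsym (a:=a) (b:=b) (c:=c) (k:=k)
    (s := (z.re:ℂ)+(z.im:ℂ)*I) (t := (z.re:ℂ)-(z.im:ℂ)*I) hstS
  simp only [hypLaplacian]
  rw [hfX, d1X, d2X, d1Y, d2Y]
  conv_rhs => rw [← Complex.re_add_im z]
  rw [coe_line (a:=a) (b:=b) (c:=c) (k:=k) z.re z.im hy]
  push_cast
  linear_combination hcore
    + ((z.im:ℂ)^2*(1-I^2)) * hsym
    + (-(z.im:ℂ)^2*(G11 a b c k ((z.re:ℂ)+(z.im:ℂ)*I) ((z.re:ℂ)-(z.im:ℂ)*I)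
          + G22 a b c k ((z.re:ℂ)+(z.im:ℂ)*I) ((z.re:ℂ)-(z.im:ℂ)*I))
        - 2*(z.im:ℂ)^2*G12 a b c k ((z.re:ℂ)+(z.im:ℂ)*I) ((z.re:ℂ)-(z.im:ℂ)*I)
        + I*(2*(k:ℂ)+2)*(z.im:ℂ)*(G1 a b c k ((z.re:ℂ)+(z.im:ℂ)*I) ((z.re:ℂ)-(z.im:ℂ)*I)
          - G2 a b c k ((z.re:ℂ)+(z.im:ℂ)*I) ((z.re:ℂ)-(z.im:ℂ)*I))) * Complex.I_sq
end
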